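/- Let n ≥ p ≥ 1 and let Y, Z ∈ ℝ^{n×p} satisfy YᵀY = I_p and ZᵀY = 0. Let Z = U Θ Vᵀ be a thin SVD of Z. Then Yᵀ(Y V cos(Θ) + U sin(Θ)) = V cos(Θ). Moreover, if every diagonal entry θ_i of Θ satisfies 0 ≤ θ_i < π/2, then this matrix V cos(Θ) is invertible. Consequently, if Y' := Y V cos(Θ) + U sin(Θ) and all singular values of Z are strictly less than π/2, then YᵀY' is invertible. -/

import Mathlib

open Matrix

/-- matrix form of the inclusion `Exp_ω(V_ω) ⊆ U_ω`.
Let `YᵀY = Iₚ`, `ZᵀY = 0`, and `Z = UΘVᵀ` be a thin SVD. Then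
`Yᵀ(Y V cos Θ + U sin Θ) = V cos Θ`; if moreover every diagonal entry of `Θ`
satisfies `0 ≤ θᵢ < π/2`, then `V cos Θ` is invertible, and consequently
`YᵀY'` is invertible where `Y' = Y V cos Θ + U sin Θ`. -/
theorem exp_lands_in_log_domain
    (n p : ℕ) (hp : 0 < p) (hpn : p ≤ n)
    (Y Z U : Matrix (Fin n) (Fin p) ℝ) (V : Matrix (Fin p) (Fin p) ℝ)
    (θ : Fin p → ℝ)
    (hY : Yᵀ * Y = 1) (hZ : Zᵀ * Y = 0)
    (hU : Uᵀ * U = 1) (hV : Vᵀ * V = 1)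
    (hθ0 : ∀ i, 0 ≤ θ i)
    (hSVD : Z = U * Matrix.diagonal θ * Vᵀ) :
    Yᵀ * (Y * V * Matrix.diagonal (fun i => Real.cos (θ i)) +
        U * Matrix.diagonal (fun i => Real.sin (θ i))) =
      V * Matrix.diagonal (fun i => Real.cos (θ i)) ∧
    ((∀ i, θ i < Real.pi / 2) →
      IsUnit (V * Matrix.diagonal (fun i => Real.cos (θ i)))) ∧
    ((∀ i, θ i < Real.pi / 2) →
      IsUnit (Yᵀ * (Y * V * Matrix.diagonal (fun i => Real.cos (θ i)) +
        U * Matrix.diagonal (fun i => Real.sin (θ i))))) := by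
  -- Step 1: diagonal θ * (Uᵀ * Y) = 0
  have hZ' : V * (Matrix.diagonal θ * (Uᵀ * Y)) = 0 := by
    have := hZ
    rw [hSVD] at this
    simpa [Matrix.transpose_mul, Matrix.diagonal_transpose, Matrix.mul_assoc] using this
  have hdiag : Matrix.diagonal θ * (Uᵀ * Y) = 0 := by
    have := congrArg (fun M => Vᵀ * M) hZ'
    simpa [← Matrix.mul_assoc, hV] using this
  -- entrywise: θ i * (UᵀY) i j = 0
  have hentry : ∀ i j, θ i * (Uᵀ * Y) i j = 0 := by
    intro i j
    have := congrFun (congrFun hdiag i) j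
    simpa [Matrix.diagonal_mul] using this
  have hsin : Matrix.diagonal (fun i => Real.sin (θ i)) * (Uᵀ * Y) = 0 := by
    ext i j
    have h := hentry i j
    rcases eq_or_ne (θ i) 0 with h0 | h0
    · simp [Matrix.diagonal_mul, h0]
    · have : (Uᵀ * Y) i j = 0 := by
        rcases mul_eq_zero.mp h with h' | h'
        · exact absurd h' h0
        · exact h'
      simp [Matrix.diagonal_mul, this]
  have hYU : Yᵀ * U * Matrix.diagonal (fun i => Real.sin (θ i)) = 0 := by
    have := congrArg Matrix.transpose hsin
    simpa [Matrix.transpose_mul, Matrix.diagonal_transpose, Matrix.mul_assoc] using this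
  have key : Yᵀ * (Y * V * Matrix.diagonal (fun i => Real.cos (θ i)) +
        U * Matrix.diagonal (fun i => Real.sin (θ i))) =
      V * Matrix.diagonal (fun i => Real.cos (θ i)) := by
    rw [Matrix.mul_add]
    have h1 : Yᵀ * (Y * V * Matrix.diagonal (fun i => Real.cos (θ i))) =
        V * Matrix.diagonal (fun i => Real.cos (θ i)) := by
      rw [← Matrix.mul_assoc, ← Matrix.mul_assoc, hY, Matrix.one_mul]
    have h2 : Yᵀ * (U * Matrix.diagonal (fun i => Real.sin (θ i))) = 0 := by
      rw [← Matrix.mul_assoc]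
      simpa [Matrix.mul_assoc] using hYU
    rw [h1, h2, add_zero]
  have hunit : (∀ i, θ i < Real.pi / 2) →
      IsUnit (V * Matrix.diagonal (fun i => Real.cos (θ i))) := by
    intro hθ
    have hVunit : IsUnit V := by
      rw [Matrix.isUnit_iff_isUnit_det]
      have : V.det * V.det = 1 := by
        have := congrArg Matrix.det hV
        simpa [Matrix.det_mul, Matrix.det_transpose, mul_comm] using this
      exact IsUnit.of_mul_eq_one _ this
    have hDunit : IsUnit (Matrix.diagonal (fun i => Real.cos (θ i))) := by
      rw [Matrix.isUnit_iff_isUnit_det, Matrix.det_diagonal]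
      refine (Finset.prod_ne_zero_iff.mpr fun i _ => ?_).isUnit
      exact (Real.cos_pos_of_mem_Ioo ⟨by linarith [Real.pi_pos, hθ0 i], hθ i⟩).ne'
    exact hVunit.mul hDunit
  exact ⟨key, hunit, fun hθ => key ▸ hunit hθ⟩
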